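/- Fix an activation function σ : ℝ → ℝ that is differentiable at 0 with σ(0) = 0, training inputs x₁,…,x_n ∈ ℝ^{p₁}, responses y ∈ ℝⁿ with y ≠ ȳ·1 (ȳ = (1/n)∑ᵢ yᵢ), and a nonzero vector w₂ ∈ ℝ^{p₂}. Define μ_{W₁}(x) = ȳ + ⟨w₂, σ(W₁x)⟩/‖w₂‖₂ and L(W₁) = ‖y − (μ_{W₁}(xᵢ))_{i=1}^n‖₂ as a function of the p₂×p₁ matrix W₁. Then L is differentiable at the zero matrix, and its gradient there is the p₂×p₁ matrix G with entries G_{jk} = −σ'(0) · (w_{2,j}/‖w₂‖₂) · (∑_{i=1}^n x_{i,k}(yᵢ − ȳ)) / ‖y − ȳ·1‖₂. -/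

import Mathlib

/-- Gradient formula for the square-root ℓ2 loss of the two-layer
network at the zero first-layer weight matrix.  `L(W₁) = ‖y − μ_{W₁}(xᵢ)‖₂` with
`μ_{W₁}(x) = ȳ + ⟨w₂, σ(W₁ x)⟩ / ‖w₂‖₂` is differentiable at the zero matrix,
with gradient matrix `G` given entrywise by
`G j k = −σ'(0) · (w₂ⱼ/‖w₂‖₂) · (∑ᵢ x_{i,k}(yᵢ − ȳ)) / ‖y − ȳ·1‖₂`
(the derivative being the linear map `W ↦ ∑ j k, G j k * W j k`). -/
theorem gradient_sqrt_l2_loss_at_zero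
    (n p₁ p₂ : ℕ)
    (σ : ℝ → ℝ) (s : ℝ) (hσ : HasDerivAt σ s 0) (hσ0 : σ 0 = 0)
    (x : Fin n → Fin p₁ → ℝ) (y : Fin n → ℝ)
    (ybar : ℝ) (hybar : ybar = (∑ i, y i) / n)
    (hy : y ≠ fun _ => ybar)
    (w₂ : Fin p₂ → ℝ) (hw₂ : w₂ ≠ 0)
    (G : Fin p₂ → Fin p₁ → ℝ)
    (hG : ∀ j k, G j k = -s * (w₂ j / Real.sqrt (∑ j', (w₂ j') ^ 2)) *
        (∑ i, x i k * (y i - ybar)) / Real.sqrt (∑ i, (y i - ybar) ^ 2)) :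
    ∃ L' : (Fin p₂ → Fin p₁ → ℝ) →L[ℝ] ℝ,
      (∀ W, L' W = ∑ j, ∑ k, G j k * W j k) ∧
      HasFDerivAt (fun W₁ : Fin p₂ → Fin p₁ → ℝ =>
        Real.sqrt (∑ i, (y i - (ybar +
          (∑ j, w₂ j * σ (∑ k, W₁ j k * x i k)) / Real.sqrt (∑ j, (w₂ j) ^ 2))) ^ 2))
        L' 0 := by
  classical
  set c : ℝ := Real.sqrt (∑ j', (w₂ j') ^ 2) with hc
  set r : ℝ := Real.sqrt (∑ i, (y i - ybar) ^ 2) with hr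
  -- positivity facts
  have hcsq : 0 < ∑ j', (w₂ j') ^ 2 := by
    have hex : ∃ j, w₂ j ≠ 0 := by
      by_contra h
      push_neg at h
      exact hw₂ (funext fun j => h j)
    obtain ⟨j, hj⟩ := hex
    exact Finset.sum_pos' (fun _ _ => sq_nonneg _) ⟨j, Finset.mem_univ j, by positivity⟩
  have hrsq : 0 < ∑ i, (y i - ybar) ^ 2 := by
    have hex : ∃ i, y i ≠ ybar := by
      by_contra h
      push_neg at h
      exact hy (funext fun i => h i)
    obtain ⟨i, hi⟩ := hex
    refine Finset.sum_pos' (fun _ _ => sq_nonneg _)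
      ⟨i, Finset.mem_univ i, ?_⟩
    have h' : y i - ybar ≠ 0 := sub_ne_zero.mpr hi
    positivity
  have hcpos : 0 < c := Real.sqrt_pos.mpr hcsq
  have hrpos : 0 < r := Real.sqrt_pos.mpr hrsq
  -- coordinate projections
  set pr : Fin p₂ → Fin p₁ → (Fin p₂ → Fin p₁ → ℝ) →L[ℝ] ℝ :=
    fun j k => (ContinuousLinearMap.proj (R := ℝ) (φ := fun _ : Fin p₁ => ℝ) k).comp
      (ContinuousLinearMap.proj (R := ℝ) (φ := fun _ : Fin p₂ => Fin p₁ → ℝ) j) with hpr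
  have hprapp : ∀ j k (W : Fin p₂ → Fin p₁ → ℝ), pr j k W = W j k := fun _ _ _ => rfl
  -- derivative of each inner linear map
  have hu : ∀ (i : Fin n) (j : Fin p₂),
      HasFDerivAt (fun W : Fin p₂ → Fin p₁ → ℝ => ∑ k, W j k * x i k)
        (∑ k, x i k • pr j k) (0 : Fin p₂ → Fin p₁ → ℝ) := by
    intro i j
    have heq : (fun W : Fin p₂ → Fin p₁ → ℝ => ∑ k, W j k * x i k)
        = fun W => (∑ k, x i k • pr j k) W := by
      funext W
      simp [hprapp, mul_comm]
    rw [heq]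
    exact (∑ k, x i k • pr j k).hasFDerivAt
  -- σ composed
  have hσc : ∀ (i : Fin n) (j : Fin p₂),
      HasFDerivAt (fun W : Fin p₂ → Fin p₁ → ℝ => σ (∑ k, W j k * x i k))
        (s • ∑ k, x i k • pr j k) 0 := by
    intro i j
    have h0 : (∑ k, (0 : Fin p₂ → Fin p₁ → ℝ) j k * x i k) = 0 := by simp
    exact HasDerivAt.comp_hasFDerivAt (0 : Fin p₂ → Fin p₁ → ℝ) (h0 ▸ hσ) (hu i j)
  -- numerator sum over j
  have hnum : ∀ i : Fin n,
      HasFDerivAt (fun W : Fin p₂ → Fin p₁ → ℝ => ∑ j, w₂ j * σ (∑ k, W j k * x i k))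
        (∑ j, w₂ j • s • ∑ k, x i k • pr j k) 0 :=
    fun i => HasFDerivAt.fun_sum fun j _ => (hσc i j).const_mul (w₂ j)
  -- each summand of the squared loss
  have hval0 : ∀ i : Fin n,
      (y i - (ybar + (∑ j, w₂ j * σ (∑ k, (0 : Fin p₂ → Fin p₁ → ℝ) j k * x i k)) / c))
        = y i - ybar := by
    intro i
    simp [hσ0]
  have hsq : ∀ i : Fin n,
      HasFDerivAt (fun W : Fin p₂ → Fin p₁ → ℝ =>
        (y i - (ybar + (∑ j, w₂ j * σ (∑ k, W j k * x i k)) / c)) ^ 2)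
        ((2 * (y i - ybar)) • -(c⁻¹ • ∑ j, w₂ j • s • ∑ k, x i k • pr j k)) 0 := by
    intro i
    have h1 : HasFDerivAt (fun W : Fin p₂ → Fin p₁ → ℝ =>
        (∑ j, w₂ j * σ (∑ k, W j k * x i k)) / c)
        (c⁻¹ • ∑ j, w₂ j • s • ∑ k, x i k • pr j k) 0 := by
      simp only [div_eq_inv_mul]
      exact (hnum i).const_mul c⁻¹
    have h2 := ((h1.const_add ybar).const_sub (y i))
    have h3 := h2.mul h2
    have e : (fun W : Fin p₂ → Fin p₁ → ℝ =>
        (y i - (ybar + (∑ j, w₂ j * σ (∑ k, W j k * x i k)) / c)) ^ 2)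
        = fun W => (y i - (ybar + (∑ j, w₂ j * σ (∑ k, W j k * x i k)) / c)) *
            (y i - (ybar + (∑ j, w₂ j * σ (∑ k, W j k * x i k)) / c)) := by
      funext W; ring
    rw [e]
    refine h3.congr_fderiv ?_
    rw [hval0 i]
    module
  -- sum of squares
  have hsum : HasFDerivAt (fun W : Fin p₂ → Fin p₁ → ℝ =>
      ∑ i, (y i - (ybar + (∑ j, w₂ j * σ (∑ k, W j k * x i k)) / c)) ^ 2)
      (∑ i, (2 * (y i - ybar)) • -(c⁻¹ • ∑ j, w₂ j • s • ∑ k, x i k • pr j k)) 0 :=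
    HasFDerivAt.fun_sum fun i _ => hsq i
  -- sqrt
  have hne : (∑ i, (y i - (ybar +
      (∑ j, w₂ j * σ (∑ k, (0 : Fin p₂ → Fin p₁ → ℝ) j k * x i k)) / c)) ^ 2) ≠ 0 := by
    rw [show (∑ i, (y i - (ybar +
      (∑ j, w₂ j * σ (∑ k, (0 : Fin p₂ → Fin p₁ → ℝ) j k * x i k)) / c)) ^ 2)
      = ∑ i, (y i - ybar) ^ 2 from Finset.sum_congr rfl fun i _ => by rw [hval0 i]]
    exact ne_of_gt hrsq
  have hfinal := hsum.sqrt hne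
  refine ⟨_, ?_, hfinal⟩
  intro W
  have hv : (∑ i, (y i - (ybar +
      (∑ j, w₂ j * σ (∑ k, (0 : Fin p₂ → Fin p₁ → ℝ) j k * x i k)) / c)) ^ 2)
      = ∑ i, (y i - ybar) ^ 2 := Finset.sum_congr rfl fun i _ => by rw [hval0 i]
  simp only [ContinuousLinearMap.coe_smul', Pi.smul_apply, ContinuousLinearMap.coe_sum',
    Finset.sum_apply, ContinuousLinearMap.coe_neg', Pi.neg_apply, hprapp, smul_eq_mul, hv]
  rw [← hr]
  -- now pure algebra
  have hc0 : c ≠ 0 := ne_of_gt hcpos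
  have hr0 : r ≠ 0 := ne_of_gt hrpos
  trans (∑ i, ∑ j, ∑ k,
      -(1 / (2 * r) * (2 * (y i - ybar) * (c⁻¹ * (w₂ j * (s * (x i k * W j k)))))))
  · simp only [Finset.mul_sum, mul_neg, ← Finset.sum_neg_distrib]
  · rw [Finset.sum_comm]
    refine Eq.trans (Finset.sum_congr rfl fun j _ => Finset.sum_comm) ?_
    refine Finset.sum_congr rfl fun j _ => Finset.sum_congr rfl fun k _ => ?_
    rw [hG j k, Finset.mul_sum, Finset.sum_div, Finset.sum_mul]
    refine Finset.sum_congr rfl fun i _ => ?_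
    field_simp
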